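/- Let q be a prime power with q ≡ 3 (mod 4), let Q be the Jacobsthal matrix of F_q, let R be the all-ones row vector of length q, and let H be the (q+1)×(q+1) integer block matrix H = [[1, R],[Rᵀ, Q − I]]. Then H is a Hadamard matrix: all entries of H are ±1 and H·Hᵀ = (q+1)·I. -/

import Mathlib

open Matrix Finset

section Paley

variable {F : Type*} [Field F] [Fintype F] [DecidableEq F]

omit [DecidableEq F] in
private lemma paley_char_ne_two (h3 : Fintype.card F % 4 = 3) : ringChar F ≠ 2 := by
  intro h
  have h2 : Fintype.card F % 2 = 0 := FiniteField.even_card_of_char_two h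
  omega

private lemma paley_jacobsthal_sum (h2 : ringChar F ≠ 2) {a : F} (ha : a ≠ 0) :
    ∑ x : F, quadraticChar F x * quadraticChar F (x + a) = -1 := by
  classical
  have key : ∀ x : F, x ≠ 0 → quadraticChar F x * quadraticChar F (x + a)
      = quadraticChar F (1 + a * x⁻¹) := by
    intro x hx
    rw [← _root_.map_mul]
    have h : x * (x + a) = x ^ 2 * (1 + a * x⁻¹) := by
      field_simp
    rw [h, _root_.map_mul, quadraticChar_sq_one' hx, one_mul]
  rw [← Finset.sum_erase_add _ _ (Finset.mem_univ (0 : F))]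
  simp only [quadraticChar_zero, zero_mul, add_zero]
  have hbij : ∑ x ∈ Finset.univ.erase (0 : F),
      quadraticChar F x * quadraticChar F (x + a)
      = ∑ y ∈ Finset.univ.erase (1 : F), quadraticChar F y := by
    apply Finset.sum_nbij' (fun x => 1 + a * x⁻¹) (fun y => a * (y - 1)⁻¹)
    · intro x hx
      simp only [Finset.mem_erase, Finset.mem_univ, and_true] at hx ⊢
      intro h
      have h' : a * x⁻¹ = 0 := by linear_combination h
      rcases mul_eq_zero.mp h' with h'' | h''
      · exact ha h''
      · exact hx (inv_eq_zero.mp h'' ▸ rfl)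
    · intro y hy
      simp only [Finset.mem_erase, Finset.mem_univ, and_true] at hy ⊢
      exact mul_ne_zero ha (inv_ne_zero (sub_ne_zero.mpr hy))
    · intro x hx
      simp only [Finset.mem_erase, Finset.mem_univ, and_true] at hx
      field_simp
      simp [ha]
    · intro y hy
      simp only [Finset.mem_erase, Finset.mem_univ, and_true] at hy
      have h1 : y - 1 ≠ 0 := sub_ne_zero.mpr hy
      field_simp
      ring
    · intro x hx
      simp only [Finset.mem_erase, Finset.mem_univ, and_true] at hx
      exact key x hx
  rw [hbij]
  have h := quadraticChar_sum_zero (F := F) h2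
  rw [← Finset.sum_erase_add _ _ (Finset.mem_univ (1 : F))] at h
  simp only [_root_.map_one] at h
  linarith

private lemma paley_chi_neg (h3 : Fintype.card F % 4 = 3) (a : F) :
    quadraticChar F (-a) = - quadraticChar F a := by
  have hns : ¬ IsSquare (-1 : F) := by
    rw [FiniteField.isSquare_neg_one_iff]; simp [h3]
  have h1 : quadraticChar F (-1) = -1 :=
    quadraticChar_neg_one_iff_not_isSquare.mpr hns
  calc quadraticChar F (-a) = quadraticChar F (-1 * a) := by ring_nf
    _ = quadraticChar F (-1) * quadraticChar F a := _root_.map_mul _ _ _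
    _ = - quadraticChar F a := by rw [h1]; ring

end Paley

/-- Paley's first construction: for a prime power `q ≡ 3 (mod 4)`, the block matrix
`H = [[1, R],[Rᵀ, Q − I]]` (with `Q` the Jacobsthal matrix of `F_q` and `R` the all-ones
row) is a Hadamard matrix of order `q + 1`: all entries are `±1` and `H·Hᵀ = (q+1)·I`. -/
theorem paley_hadamard_type_I {F : Type*} [Field F] [Fintype F] [DecidableEq F]
    (h3 : Fintype.card F % 4 = 3)
    (H : Matrix (Option F) (Option F) ℤ)
    (hH : ∀ i j : Option F, H i j =
      match i, j with
      | none, _ => 1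
      | some _, none => 1
      | some u, some v => quadraticChar F (v - u) - (if u = v then 1 else 0)) :
    (∀ i j : Option F, H i j = 1 ∨ H i j = -1) ∧
      H * Hᵀ = ((Fintype.card F : ℤ) + 1) • (1 : Matrix (Option F) (Option F) ℤ) := by
  have h2 := paley_char_ne_two (F := F) h3
  have hnn : ∀ j : Option F, H none j = 1 := fun j => hH none j
  have hsn : ∀ u : F, H (some u) none = 1 := fun u => hH (some u) none
  have hss : ∀ u v : F, H (some u) (some v)
      = quadraticChar F (v - u) - (if u = v then 1 else 0) := fun u v => hH (some u) (some v)
  constructor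
  · intro i j
    match i, j with
    | none, j => exact Or.inl (hnn j)
    | some u, none => exact Or.inl (hsn u)
    | some u, some v =>
      rw [hss u v]
      by_cases huv : u = v
      · subst huv; simp
      · have hne : v - u ≠ 0 := sub_ne_zero.mpr (Ne.symm huv)
        rcases quadraticChar_dichotomy hne with h | h <;> simp [huv, h]
  · ext i j
    simp only [mul_apply, transpose_apply, Matrix.smul_apply, one_apply, smul_eq_mul, mul_ite,
      mul_one, mul_zero]
    rw [show (∑ k, H i k * H j k) = ∑ k, H i k * H j k from rfl]
    match i, j with
    | none, none =>
      simp only [hnn, hsn, hss, Fintype.sum_option, one_mul, if_true]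
      rw [Finset.sum_const, Finset.card_univ]
      push_cast
      ring
    | none, some v =>
      simp only [hnn, hsn, hss, Fintype.sum_option, one_mul]
      have hsum : ∑ w : F, ((quadraticChar F (w - v) : ℤ) - if v = w then 1 else 0)
          = ∑ w : F, (quadraticChar F (w - v) : ℤ) - 1 := by
        rw [Finset.sum_sub_distrib]
        congr 1
        simp
      rw [hsum]
      have : ∑ w : F, (quadraticChar F (w - v) : ℤ) = ∑ w : F, quadraticChar F w := by
        exact Fintype.sum_equiv (Equiv.subRight v) _ _ (fun w => rfl)
      rw [this, quadraticChar_sum_zero h2]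
      simp
    | some u, none =>
      simp only [hnn, hsn, hss, Fintype.sum_option, mul_one]
      have hsum : ∑ w : F, ((quadraticChar F (w - u) : ℤ) - if u = w then 1 else 0)
          = ∑ w : F, (quadraticChar F (w - u) : ℤ) - 1 := by
        rw [Finset.sum_sub_distrib]; congr 1; simp
      rw [hsum]
      have : ∑ w : F, (quadraticChar F (w - u) : ℤ) = ∑ w : F, quadraticChar F w :=
        Fintype.sum_equiv (Equiv.subRight u) _ _ (fun w => rfl)
      rw [this, quadraticChar_sum_zero h2]
      simp
    | some u, some v =>
      simp only [hnn, hsn, hss, Fintype.sum_option, one_mul]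
      -- term: ∑ w, (χ(w-u) - δ_{u w})(χ(w-v) - δ_{v w})
      by_cases huv : u = v
      · subst huv
        simp only [if_pos rfl, reduceIte]
        have : ∀ w : F, ((quadraticChar F (w - u) : ℤ) - if u = w then 1 else 0) *
            ((quadraticChar F (w - u) : ℤ) - if u = w then 1 else 0)
            = if u = w then 1 else 1 := by
          intro w
          by_cases hw : u = w
          · subst hw; simp
          · have hne : w - u ≠ 0 := sub_ne_zero.mpr (Ne.symm hw)
            rcases quadraticChar_dichotomy hne with h | h <;> simp [hw, h]
        simp only [this, ite_self]
        rw [Finset.sum_const, Finset.card_univ]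
        push_cast
        ring
      · have hov : (some u : Option F) ≠ some v := by simpa using huv
        rw [if_neg hov]
        have expand : ∀ w : F,
            ((quadraticChar F (w - u) : ℤ) - if u = w then 1 else 0) *
            ((quadraticChar F (w - v) : ℤ) - if v = w then 1 else 0)
            = quadraticChar F (w - u) * quadraticChar F (w - v)
              - (if u = w then (quadraticChar F (w - v) : ℤ) else 0)
              - (if v = w then (quadraticChar F (w - u) : ℤ) else 0)
              + (if u = w then (if v = w then (1:ℤ) else 0) else 0) := by
          intro w
          by_cases h1 : u = w <;> by_cases h2 : v = w <;> simp [h1, h2] <;> ring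
        simp only [expand]
        rw [Finset.sum_add_distrib, Finset.sum_sub_distrib, Finset.sum_sub_distrib]
        have e1 : ∑ w : F, (if u = w then (quadraticChar F (w - v) : ℤ) else 0)
            = quadraticChar F (u - v) := by
          rw [Finset.sum_ite_eq]; simp
        have e2 : ∑ w : F, (if v = w then (quadraticChar F (w - u) : ℤ) else 0)
            = quadraticChar F (v - u) := by
          rw [Finset.sum_ite_eq]; simp
        have e3 : ∑ w : F, (if u = w then (if v = w then (1:ℤ) else 0) else 0) = 0 := by
          rw [Finset.sum_ite_eq]
          simp [Ne.symm huv]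
        have e4 : ∑ w : F, (quadraticChar F (w - u) : ℤ) * quadraticChar F (w - v) = -1 := by
          have hre : ∀ w : F, (quadraticChar F (w - u) : ℤ) * quadraticChar F (w - v)
              = quadraticChar F (w - u) * quadraticChar F ((w - u) + (u - v)) := by
            intro w; congr 2; ring
          simp only [hre]
          have := Fintype.sum_equiv (Equiv.subRight u)
            (fun w => (quadraticChar F (w - u) : ℤ) * quadraticChar F ((w - u) + (u - v)))
            (fun x => (quadraticChar F x : ℤ) * quadraticChar F (x + (u - v)))
            (fun w => rfl)
          rw [this]
          exact paley_jacobsthal_sum h2 (sub_ne_zero.mpr huv)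
        have e5 : quadraticChar F (u - v) = - quadraticChar F (v - u) := by
          have : u - v = -(v - u) := by ring
          rw [this, paley_chi_neg h3]
        rw [e1, e2, e3, e4, e5]
        ring
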